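/- arXiv:2012.09738 — 2 statements merged into one kernel-verified Lean document; each statement's English description precedes it below -/
import Mathlib

section
/- Let M be a 2^n × 2^n real matrix with all entries in [-1,1], let I ⊆ (ZMod 2)^n be an index set, and let β = max_{i ∈ I} ∑_{j ≠ i} |M_{i,j}|. Let q_1, …, q_k be i.i.d. uniform samples from (ZMod 2)^n and M̂ = k^{-1} ∑_ℓ D_{q_ℓ} M D_{q_ℓ} with D_q = diag((-1)^{⟨v,q⟩}). If k ≥ 2 (log(2/δ) + n log 2 + log|I|) (1+β)²/ε², then with probability at least 1 − δ, simultaneously for all i ∈ I: |∑_{j ≠ i} M̂_{i,j}| ≤ ε and |M̂_{i,i} − M_{i,i}| ≤ ε. -/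
open Matrix Finset

/-- The sign vector `d_q` with entries `(-1)^{⟨v,q⟩}`. -/
noncomputable def signVec (n : ℕ) (q v : Fin n → ZMod 2) : ℝ :=
  (-1 : ℝ) ^ (∑ i, v i * q i : ZMod 2).val

/-- The sign-twirled average `M̂ = k⁻¹ ∑_ℓ D_{q_ℓ} M D_{q_ℓ}` for a sample
`qs : Fin k → (ZMod 2)^n`. -/
noncomputable def twirlAvg (n k : ℕ) (M : Matrix (Fin n → ZMod 2) (Fin n → ZMod 2) ℝ)
    (qs : Fin k → (Fin n → ZMod 2)) : Matrix (Fin n → ZMod 2) (Fin n → ZMod 2) ℝ :=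
  Matrix.of fun i j => (k : ℝ)⁻¹ * ∑ ℓ, signVec n (qs ℓ) i * M i j * signVec n (qs ℓ) j

lemma neg_one_pow_mod_two (m : ℕ) : (-1:ℝ)^(m % 2) = (-1)^m := by
  conv_rhs => rw [← Nat.div_add_mod m 2]
  rw [pow_add, pow_mul]
  norm_num

lemma neg_one_pow_val_add (a b : ZMod 2) :
    (-1:ℝ)^((a+b).val) = (-1)^a.val * (-1)^b.val := by
  rw [ZMod.val_add, neg_one_pow_mod_two, pow_add]

lemma signVec_mul (n : ℕ) (q i j : Fin n → ZMod 2) :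
    signVec n q i * signVec n q j = signVec n q (i + j) := by
  unfold signVec
  rw [show (∑ m, (i + j) m * q m) = (∑ m, i m * q m) + ∑ m, j m * q m by
    rw [← Finset.sum_add_distrib]; exact Finset.sum_congr rfl fun m _ => by
      simp [add_mul]]
  rw [neg_one_pow_val_add]

lemma signVec_sq (n : ℕ) (q v : Fin n → ZMod 2) : signVec n q v * signVec n q v = 1 := by
  unfold signVec
  rw [← pow_add, ← two_mul, pow_mul]
  norm_num

lemma signVec_eq_or (n : ℕ) (q v : Fin n → ZMod 2) :
    signVec n q v = 1 ∨ signVec n q v = -1 := by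
  unfold signVec
  rcases Nat.even_or_odd (∑ i, v i * q i : ZMod 2).val with h | h
  · exact Or.inl (Even.neg_one_pow h)
  · exact Or.inr (Odd.neg_one_pow h)

lemma signVec_flip (n : ℕ) (v : Fin n → ZMod 2) (hv : v ≠ 0) :
    ∃ u : Fin n → ZMod 2, ∀ q, signVec n (q + u) v = - signVec n q v := by
  have hex : ∃ i₀, v i₀ ≠ 0 := by
    by_contra h; push_neg at h; exact hv (funext fun i => h i)
  obtain ⟨i₀, hi₀⟩ := hex
  have hv1 : v i₀ = 1 := by
    have : ∀ x : ZMod 2, x ≠ 0 → x = 1 := by decide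
    exact this _ hi₀
  set u : Fin n → ZMod 2 := Pi.single i₀ 1 with hu
  refine ⟨u, fun q => ?_⟩
  have hsum : (∑ m, v m * (q + u) m) = (∑ m, v m * q m) + 1 := by
    have : ∀ m, v m * (q + u) m = v m * q m + v m * u m := fun m => by
      simp [mul_add]
    rw [Finset.sum_congr rfl fun m _ => this m, Finset.sum_add_distrib]
    congr 1
    rw [Fintype.sum_eq_single i₀ (fun m hm => by simp [hu, Pi.single_eq_of_ne hm])]
    simp [hu, hv1]
  unfold signVec
  rw [hsum, neg_one_pow_val_add, ZMod.val_one]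
  ring

lemma mgf_bound (n : ℕ) (s : (Fin n → ZMod 2) → ℝ)
    (hs : ∀ q, s q = 1 ∨ s q = -1)
    (hflip : ∃ u, ∀ q, s (q + u) = - s q) (l : ℝ) :
    ∑ q, Real.exp (l * s q) ≤ (2^n : ℝ) * Real.exp (l^2/2) := by
  obtain ⟨u, hu⟩ := hflip
  have hsymm : ∑ q, Real.exp (l * s q) = ∑ q, Real.exp (-(l * s q)) := by
    calc ∑ q, Real.exp (l * s q)
        = ∑ q, Real.exp (l * s (q + u)) :=
          (Fintype.sum_equiv (Equiv.addRight u) _ _ (fun q => rfl)).symm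
      _ = ∑ q, Real.exp (-(l * s q)) := by
          refine Finset.sum_congr rfl fun q _ => ?_
          rw [hu q, mul_neg]
  have hpt : ∀ q, Real.exp (l * s q) + Real.exp (-(l * s q))
      = Real.exp l + Real.exp (-l) := by
    intro q
    rcases hs q with h | h <;> rw [h] <;> ring_nf
  have hcard : (Fintype.card (Fin n → ZMod 2) : ℝ) = 2^n := by
    simp [ZMod.card]
  have h2 : (2:ℝ) * ∑ q, Real.exp (l * s q)
      = (2^n : ℝ) * (Real.exp l + Real.exp (-l)) := by
    rw [two_mul]
    nth_rewrite 2 [hsymm]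
    rw [← Finset.sum_add_distrib, Finset.sum_congr rfl fun q _ => hpt q,
      Finset.sum_const, card_univ, nsmul_eq_mul, hcard]
  have hcosh : Real.exp l + Real.exp (-l) = 2 * Real.cosh l := by
    rw [Real.cosh_eq]; ring
  have hle : Real.cosh l ≤ Real.exp (l^2/2) := Real.cosh_le_exp_half_sq l
  nlinarith [pow_pos (show (0:ℝ) < 2 by norm_num) n]

lemma chernoff_one (n k : ℕ) (s : (Fin n → ZMod 2) → ℝ)
    (hmgf : ∀ l : ℝ, ∑ q, Real.exp (l * s q) ≤ (2^n:ℝ) * Real.exp (l^2/2))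
    (t : ℝ) (ht : 0 ≤ t) :
    (((univ : Finset (Fin k → (Fin n → ZMod 2))).filter
        fun qs => (k:ℝ)*t ≤ ∑ ℓ, s (qs ℓ)).card : ℝ)
      ≤ Real.exp (-((k:ℝ)*t^2)/2) * (2^n:ℝ)^k := by
  set F := (univ : Finset (Fin k → (Fin n → ZMod 2))).filter
      fun qs => (k:ℝ)*t ≤ ∑ ℓ, s (qs ℓ) with hF
  have hfact : ∑ qs : Fin k → (Fin n → ZMod 2), Real.exp (t * ∑ ℓ, s (qs ℓ))
      = (∑ q, Real.exp (t * s q))^k := by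
    have h1 : ∀ qs : Fin k → (Fin n → ZMod 2),
        Real.exp (t * ∑ ℓ, s (qs ℓ)) = ∏ ℓ, Real.exp (t * s (qs ℓ)) := fun qs => by
      rw [Finset.mul_sum, Real.exp_sum]
    rw [Finset.sum_congr rfl fun qs _ => h1 qs, ← Fintype.piFinset_univ,
      Finset.sum_prod_piFinset (univ : Finset (Fin n → ZMod 2))
        (fun (_ : Fin k) q => Real.exp (t * s q)),
      Finset.prod_const, card_univ, Fintype.card_fin]
  have hub : ∑ qs : Fin k → (Fin n → ZMod 2), Real.exp (t * ∑ ℓ, s (qs ℓ))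
      ≤ (2^n:ℝ)^k * Real.exp ((k:ℝ)*(t^2/2)) := by
    rw [hfact]
    calc (∑ q, Real.exp (t * s q))^k ≤ ((2^n:ℝ) * Real.exp (t^2/2))^k :=
          pow_le_pow_left₀ (Finset.sum_nonneg fun q _ => (Real.exp_pos _).le) (hmgf t) k
      _ = (2^n:ℝ)^k * Real.exp ((k:ℝ)*(t^2/2)) := by
          rw [mul_pow, ← Real.exp_nat_mul]
  have hlb : (F.card : ℝ) * Real.exp ((k:ℝ)*t^2)
      ≤ ∑ qs : Fin k → (Fin n → ZMod 2), Real.exp (t * ∑ ℓ, s (qs ℓ)) := by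
    calc (F.card : ℝ) * Real.exp ((k:ℝ)*t^2)
        = ∑ _qs ∈ F, Real.exp ((k:ℝ)*t^2) := by
          rw [Finset.sum_const, nsmul_eq_mul]
      _ ≤ ∑ qs ∈ F, Real.exp (t * ∑ ℓ, s (qs ℓ)) := by
          refine Finset.sum_le_sum fun qs hqs => ?_
          rw [hF, Finset.mem_filter] at hqs
          apply Real.exp_le_exp.mpr
          calc (k:ℝ)*t^2 = t * ((k:ℝ)*t) := by ring
            _ ≤ t * ∑ ℓ, s (qs ℓ) := mul_le_mul_of_nonneg_left hqs.2 ht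
      _ ≤ ∑ qs : Fin k → (Fin n → ZMod 2), Real.exp (t * ∑ ℓ, s (qs ℓ)) :=
          Finset.sum_le_sum_of_subset_of_nonneg (Finset.filter_subset _ _)
            fun qs _ _ => (Real.exp_pos _).le
  have key : (F.card : ℝ) * Real.exp ((k:ℝ)*t^2)
      ≤ (2^n:ℝ)^k * Real.exp ((k:ℝ)*(t^2/2)) := hlb.trans hub
  have hpos := Real.exp_pos ((k:ℝ)*t^2)
  have h2 : (F.card:ℝ) ≤ (2^n:ℝ)^k * Real.exp ((k:ℝ)*(t^2/2)) / Real.exp ((k:ℝ)*t^2) := by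
    rw [le_div_iff₀ hpos]; exact key
  refine h2.trans_eq ?_
  have harg : (k:ℝ)*(t^2/2) - (k:ℝ)*t^2 = -((k:ℝ)*t^2)/2 := by ring
  rw [mul_div_assoc, ← Real.exp_sub, harg, mul_comm]

lemma chernoff_two (n k : ℕ) (s : (Fin n → ZMod 2) → ℝ)
    (hs : ∀ q, s q = 1 ∨ s q = -1)
    (hflip : ∃ u, ∀ q, s (q + u) = - s q) (t : ℝ) (ht : 0 ≤ t) :
    (((univ : Finset (Fin k → (Fin n → ZMod 2))).filter
        fun qs => (k:ℝ)*t ≤ |∑ ℓ, s (qs ℓ)|).card : ℝ)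
      ≤ 2 * Real.exp (-((k:ℝ)*t^2)/2) * (2^n:ℝ)^k := by
  have hs' : ∀ q, -(s q) = 1 ∨ -(s q) = -1 := fun q => by
    rcases hs q with h | h <;> rw [h] <;> simp
  have hflip' : ∃ u, ∀ q, -(s (q + u)) = - (-(s q)) := by
    obtain ⟨u, hu⟩ := hflip
    exact ⟨u, fun q => by rw [hu q]⟩
  set F1 := (univ : Finset (Fin k → (Fin n → ZMod 2))).filter
      (fun qs => (k:ℝ)*t ≤ ∑ ℓ, s (qs ℓ)) with hF1
  set F2 := (univ : Finset (Fin k → (Fin n → ZMod 2))).filter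
      (fun qs => (k:ℝ)*t ≤ ∑ ℓ, -(s (qs ℓ))) with hF2
  have hsub : ((univ : Finset (Fin k → (Fin n → ZMod 2))).filter
      fun qs => (k:ℝ)*t ≤ |∑ ℓ, s (qs ℓ)|) ⊆ F1 ∪ F2 := by
    intro qs hqs
    rw [Finset.mem_filter] at hqs
    rw [Finset.mem_union, hF1, hF2, Finset.mem_filter, Finset.mem_filter]
    rcases le_abs.mp hqs.2 with h | h
    · exact Or.inl ⟨Finset.mem_univ _, h⟩
    · refine Or.inr ⟨Finset.mem_univ _, ?_⟩
      rw [Finset.sum_neg_distrib]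
      exact h
  have hcard : (((univ : Finset (Fin k → (Fin n → ZMod 2))).filter
      fun qs => (k:ℝ)*t ≤ |∑ ℓ, s (qs ℓ)|).card : ℝ) ≤ (F1.card : ℝ) + (F2.card : ℝ) := by
    have h1 := Finset.card_le_card hsub
    have h2 := Finset.card_union_le F1 F2
    exact_mod_cast (h1.trans h2)
  have b1 := chernoff_one n k s (mgf_bound n s hs hflip) t ht
  have b2 := chernoff_one n k (fun q => -(s q)) (mgf_bound n _ hs' hflip') t ht
  rw [← hF1] at b1
  rw [← hF2] at b2
  linarith

/-- Sample complexity of approximate diagonalization: with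
`k ≥ 2 (log(2/δ) + n log 2 + log |I|) (1+β)² / ε²` uniformly random sign twirls, the
averaged matrix `M̂` has, simultaneously for all `i ∈ I`, off-diagonal row sums at most
`ε` and diagonal entries within `ε` of those of `M`, with probability at least `1 - δ`. -/
theorem approximate_diagonalization_sample_complexity
    (n k : ℕ) (M : Matrix (Fin n → ZMod 2) (Fin n → ZMod 2) ℝ)
    (I : Finset (Fin n → ZMod 2)) (β ε δ : ℝ)
    (hM : ∀ i j, |M i j| ≤ 1)
    (hβ : ∀ i ∈ I, ∑ j ∈ Finset.univ.erase i, |M i j| ≤ β)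
    (hε : 0 < ε) (hδ0 : 0 < δ) (hδ1 : δ < 1)
    (hk : (k : ℝ) ≥ 2 * (Real.log (2 / δ) + n * Real.log 2 + Real.log I.card)
            * (1 + β) ^ 2 / ε ^ 2) :
    1 - δ ≤
      ((Finset.univ.filter fun qs : Fin k → (Fin n → ZMod 2) =>
          ∀ i ∈ I, |∑ j ∈ Finset.univ.erase i, twirlAvg n k M qs i j| ≤ ε ∧
            |twirlAvg n k M qs i i - M i i| ≤ ε).card : ℝ)
        / ((2 ^ n : ℝ) ^ k) := by
  have hcardX : (Fintype.card (Fin n → ZMod 2)) = 2^n := by simp [ZMod.card]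
  have hcardΩ : ((Fintype.card (Fin k → (Fin n → ZMod 2))) : ℝ) = ((2:ℝ)^n)^k := by
    have h0 : Fintype.card (Fin k → (Fin n → ZMod 2)) = (2^n)^k := by
      rw [Fintype.card_fun, hcardX, Fintype.card_fin]
    rw [h0]; push_cast; ring
  have hT : (0:ℝ) < ((2:ℝ)^n)^k := by positivity
  rcases I.eq_empty_or_nonempty with hI | ⟨i₀, hi₀⟩
  · subst hI
    have : (Finset.univ.filter fun qs : Fin k → (Fin n → ZMod 2) =>
          ∀ i ∈ (∅ : Finset (Fin n → ZMod 2)),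
            |∑ j ∈ Finset.univ.erase i, twirlAvg n k M qs i j| ≤ ε ∧
            |twirlAvg n k M qs i i - M i i| ≤ ε) = univ := by
      refine Finset.filter_true_of_mem fun qs _ => ?_
      intro i hi; exact absurd hi (Finset.notMem_empty i)
    rw [this, card_univ, hcardΩ, div_self hT.ne']
    linarith
  · -- main case
    have hβ0 : 0 ≤ β :=
      le_trans (Finset.sum_nonneg fun j _ => abs_nonneg _) (hβ i₀ hi₀)
    have h1β : (0:ℝ) < 1 + β := by linarith
    have hIcard : (1:ℝ) ≤ (I.card:ℝ) := by
      exact_mod_cast Finset.card_pos.mpr ⟨i₀, hi₀⟩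
    set L : ℝ := Real.log (2/δ) + n * Real.log 2 + Real.log I.card with hLdef
    have hL : 0 < L := by
      have h1 : 0 < Real.log (2/δ) := Real.log_pos (by
        rw [lt_div_iff₀ hδ0]; linarith)
      have h2 : (0:ℝ) ≤ n * Real.log 2 := by
        positivity
      have h3 : (0:ℝ) ≤ Real.log I.card := Real.log_nonneg hIcard
      simp only [hLdef]; linarith
    have hk0 : (0:ℝ) < k := by
      refine lt_of_lt_of_le ?_ hk
      positivity
    have hkn : (k:ℝ) ≠ 0 := hk0.ne'
    set τ : ℝ := ε / (1 + β) with hτdef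
    have hτ : 0 < τ := div_pos hε h1β
    clear_value L τ
    -- diagonal exactness
    have hdiag : ∀ (qs : Fin k → (Fin n → ZMod 2)) i, twirlAvg n k M qs i i = M i i := by
      intro qs i
      show (k:ℝ)⁻¹ * ∑ ℓ, signVec n (qs ℓ) i * M i i * signVec n (qs ℓ) i = M i i
      have h1 : ∀ ℓ : Fin k, signVec n (qs ℓ) i * M i i * signVec n (qs ℓ) i = M i i := by
        intro ℓ
        calc signVec n (qs ℓ) i * M i i * signVec n (qs ℓ) i
            = (signVec n (qs ℓ) i * signVec n (qs ℓ) i) * M i i := by ring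
          _ = M i i := by rw [signVec_sq]; ring
      rw [Finset.sum_congr rfl fun ℓ _ => h1 ℓ, Finset.sum_const, card_univ,
        Fintype.card_fin, nsmul_eq_mul, ← mul_assoc, inv_mul_cancel₀ hkn, one_mul]
    -- off-diagonal representation
    have hoff : ∀ (qs : Fin k → (Fin n → ZMod 2)) i j, twirlAvg n k M qs i j
        = (k:ℝ)⁻¹ * M i j * ∑ ℓ, signVec n (qs ℓ) (i+j) := by
      intro qs i j
      show (k:ℝ)⁻¹ * ∑ ℓ, signVec n (qs ℓ) i * M i j * signVec n (qs ℓ) j = _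
      have h1 : ∀ ℓ : Fin k, signVec n (qs ℓ) i * M i j * signVec n (qs ℓ) j
          = M i j * signVec n (qs ℓ) (i+j) := fun ℓ => by
        rw [← signVec_mul n (qs ℓ) i j]; ring
      rw [Finset.sum_congr rfl fun ℓ _ => h1 ℓ, ← Finset.mul_sum, ← mul_assoc]
    classical
    -- per-pair bad sets
    set Bij : (Fin n → ZMod 2) → (Fin n → ZMod 2) → Finset (Fin k → (Fin n → ZMod 2)) :=
      fun i j => univ.filter (fun qs => ¬ (|twirlAvg n k M qs i j| ≤ τ * |M i j|)) with hBijdef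
    set C : ℝ := 2 * Real.exp (-((k:ℝ)*τ^2)/2) * ((2:ℝ)^n)^k with hCdef
    have hC0 : 0 ≤ C := by positivity
    have hBij : ∀ i : Fin n → ZMod 2, ∀ j ∈ (univ : Finset (Fin n → ZMod 2)).erase i,
        ((Bij i j).card : ℝ) ≤ C := by
      intro i j hj
      have hji : j ≠ i := Finset.ne_of_mem_erase hj
      by_cases hM0 : M i j = 0
      · have hempty : Bij i j = ∅ := by
          refine Finset.filter_false_of_mem fun qs _ => ?_
          rw [not_not, hoff qs i j, hM0]
          simp
        rw [hempty]; simpa using hC0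
      · have hv : i + j ≠ (0 : Fin n → ZMod 2) := by
          intro h
          have hd : ∀ a b : ZMod 2, a + b = 0 → a = b := by decide
          have : i = j := funext fun m => hd _ _ (congrFun h m)
          exact hji this.symm
        have hs : ∀ q, signVec n q (i+j) = 1 ∨ signVec n q (i+j) = -1 :=
          fun q => signVec_eq_or n q (i+j)
        have hflip := signVec_flip n (i+j) hv
        have hMpos : 0 < |M i j| := abs_pos.mpr hM0
        have hsub : Bij i j ⊆ univ.filter
            (fun qs => (k:ℝ)*τ ≤ |∑ ℓ, signVec n (qs ℓ) (i+j)|) := by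
          intro qs hqs
          rw [hBijdef, Finset.mem_filter] at hqs
          rw [Finset.mem_filter]
          refine ⟨Finset.mem_univ _, ?_⟩
          have h2 := hqs.2
          push_neg at h2
          rw [hoff qs i j] at h2
          rw [abs_mul, abs_mul, abs_inv, Nat.abs_cast] at h2
          have hck : (k:ℝ) * (k:ℝ)⁻¹ = 1 := mul_inv_cancel₀ hkn
          have step : (k:ℝ) * τ * |M i j| < |M i j| * |∑ ℓ, signVec n (qs ℓ) (i+j)| := by
            calc (k:ℝ) * τ * |M i j| = (k:ℝ) * (τ * |M i j|) := by ring
              _ < (k:ℝ) * ((k:ℝ)⁻¹ * |M i j| * |∑ ℓ, signVec n (qs ℓ) (i+j)|) :=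
                  mul_lt_mul_of_pos_left h2 hk0
              _ = ((k:ℝ) * (k:ℝ)⁻¹) * (|M i j| * |∑ ℓ, signVec n (qs ℓ) (i+j)|) := by ring
              _ = |M i j| * |∑ ℓ, signVec n (qs ℓ) (i+j)| := by rw [hck, one_mul]
          rw [mul_comm (|M i j|)] at step
          exact (lt_of_mul_lt_mul_right step (abs_nonneg _)).le
        calc ((Bij i j).card : ℝ)
            ≤ ((univ.filter (fun qs : Fin k → (Fin n → ZMod 2) =>
                (k:ℝ)*τ ≤ |∑ ℓ, signVec n (qs ℓ) (i+j)|)).card : ℝ) := by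
              exact_mod_cast Finset.card_le_card hsub
          _ ≤ C := by
              rw [hCdef]
              exact chernoff_two n k (fun q => signVec n q (i+j)) hs hflip τ hτ.le
    -- good events
    have hgood : ∀ qs : Fin k → (Fin n → ZMod 2),
        (∀ i ∈ I, ∀ j ∈ (univ : Finset (Fin n → ZMod 2)).erase i,
          |twirlAvg n k M qs i j| ≤ τ * |M i j|) →
        (∀ i ∈ I, |∑ j ∈ Finset.univ.erase i, twirlAvg n k M qs i j| ≤ ε ∧
          |twirlAvg n k M qs i i - M i i| ≤ ε) := by
      intro qs h i hi
      constructor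
      · calc |∑ j ∈ Finset.univ.erase i, twirlAvg n k M qs i j|
            ≤ ∑ j ∈ Finset.univ.erase i, |twirlAvg n k M qs i j| :=
              Finset.abs_sum_le_sum_abs _ _
          _ ≤ ∑ j ∈ Finset.univ.erase i, τ * |M i j| :=
              Finset.sum_le_sum fun j hj => h i hi j hj
          _ = τ * ∑ j ∈ Finset.univ.erase i, |M i j| := (Finset.mul_sum _ _ _).symm
          _ ≤ τ * β := mul_le_mul_of_nonneg_left (hβ i hi) hτ.le
          _ ≤ ε := by
              rw [hτdef, div_mul_eq_mul_div, div_le_iff₀ h1β]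
              nlinarith
      · rw [hdiag qs i, sub_self, abs_zero]; exact hε.le
    -- bad set
    set B : Finset (Fin k → (Fin n → ZMod 2)) := univ.filter
      (fun qs => ¬ (∀ i ∈ I, |∑ j ∈ Finset.univ.erase i, twirlAvg n k M qs i j| ≤ ε ∧
          |twirlAvg n k M qs i i - M i i| ≤ ε)) with hBdef
    have hBsub : B ⊆ I.biUnion (fun i => ((univ : Finset (Fin n → ZMod 2)).erase i).biUnion
        (fun j => Bij i j)) := by
      intro qs hqs
      rw [hBdef, Finset.mem_filter] at hqs
      by_contra hnot
      apply hqs.2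
      apply hgood
      intro i hi j hj
      by_contra hcon
      exact hnot (Finset.mem_biUnion.mpr ⟨i, hi, Finset.mem_biUnion.mpr
        ⟨j, hj, Finset.mem_filter.mpr ⟨Finset.mem_univ _, hcon⟩⟩⟩)
    have hErase : ∀ i : Fin n → ZMod 2,
        (((univ : Finset (Fin n → ZMod 2)).erase i).card : ℝ) ≤ (2:ℝ)^n := by
      intro i
      have h1 := Finset.card_erase_le (s := (univ : Finset (Fin n → ZMod 2))) (a := i)
      have h2 : ((univ : Finset (Fin n → ZMod 2)).card) = 2^n := by
        rw [card_univ, hcardX]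
      calc ((((univ : Finset (Fin n → ZMod 2)).erase i).card : ℕ) : ℝ)
          ≤ (((univ : Finset (Fin n → ZMod 2)).card : ℕ) : ℝ) := by exact_mod_cast h1
        _ = (2:ℝ)^n := by rw [h2]; push_cast; ring
    have hBcard : (B.card : ℝ) ≤ (I.card : ℝ) * ((2:ℝ)^n * C) := by
      have h1 : B.card ≤ ∑ i ∈ I, ∑ j ∈ (univ : Finset (Fin n → ZMod 2)).erase i,
          (Bij i j).card := by
        calc B.card ≤ (I.biUnion (fun i => ((univ : Finset (Fin n → ZMod 2)).erase i).biUnion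
              (fun j => Bij i j))).card := Finset.card_le_card hBsub
          _ ≤ ∑ i ∈ I, (((univ : Finset (Fin n → ZMod 2)).erase i).biUnion
              (fun j => Bij i j)).card := Finset.card_biUnion_le
          _ ≤ _ := Finset.sum_le_sum fun i _ => Finset.card_biUnion_le
      calc (B.card : ℝ)
          ≤ ∑ i ∈ I, ∑ j ∈ (univ : Finset (Fin n → ZMod 2)).erase i,
            ((Bij i j).card : ℝ) := by exact_mod_cast h1
        _ ≤ ∑ i ∈ I, ∑ _j ∈ (univ : Finset (Fin n → ZMod 2)).erase i, C :=
            Finset.sum_le_sum fun i _ => Finset.sum_le_sum fun j hj => hBij i j hj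
        _ = ∑ i ∈ I, (((univ : Finset (Fin n → ZMod 2)).erase i).card : ℝ) * C := by
            refine Finset.sum_congr rfl fun i _ => ?_
            rw [Finset.sum_const, nsmul_eq_mul]
        _ ≤ ∑ _i ∈ I, (2:ℝ)^n * C :=
            Finset.sum_le_sum fun i _ => mul_le_mul_of_nonneg_right (hErase i) hC0
        _ = (I.card : ℝ) * ((2:ℝ)^n * C) := by rw [Finset.sum_const, nsmul_eq_mul]
    -- exponential bound
    have hexp : Real.exp (-((k:ℝ)*τ^2)/2) ≤ δ/2 * ((2:ℝ)^n)⁻¹ * ((I.card:ℝ))⁻¹ := by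
      have hkε : 2 * L * (1+β)^2 ≤ (k:ℝ) * ε^2 := by
        rw [ge_iff_le, div_le_iff₀ (pow_pos hε 2)] at hk
        linarith
      have harg : L ≤ (k:ℝ) * τ^2 / 2 := by
        have hτ2 : τ^2 * (1+β)^2 = ε^2 := by rw [hτdef]; field_simp
        have h' : 2*L*(1+β)^2 ≤ ((k:ℝ)*τ^2)*(1+β)^2 := by
          calc 2*L*(1+β)^2 ≤ (k:ℝ)*ε^2 := hkε
            _ = ((k:ℝ)*τ^2)*(1+β)^2 := by rw [← hτ2]; ring
        have h'' : 2*L ≤ (k:ℝ)*τ^2 := le_of_mul_le_mul_right h' (pow_pos h1β 2)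
        linarith
      have h1 : Real.exp (-((k:ℝ)*τ^2)/2) ≤ Real.exp (-L) := by
        apply Real.exp_le_exp.mpr
        linarith
      have h2 : Real.exp (-L) = δ/2 * ((2:ℝ)^n)⁻¹ * ((I.card:ℝ))⁻¹ := by
        rw [hLdef, show -(Real.log (2/δ) + n * Real.log 2 + Real.log I.card)
          = (-Real.log (2/δ)) + (-(n * Real.log 2)) + (-Real.log I.card) by ring,
          Real.exp_add, Real.exp_add]
        congr 1
        · congr 1
          · rw [Real.exp_neg, Real.exp_log (by positivity), inv_div]
          · rw [Real.exp_neg, Real.exp_nat_mul, Real.exp_log two_pos]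
        · rw [Real.exp_neg, Real.exp_log (by linarith)]
      rw [← h2]; exact h1
    have hfinal : (B.card : ℝ) ≤ δ * ((2:ℝ)^n)^k := by
      have step : (I.card : ℝ) * ((2:ℝ)^n * C) ≤ δ * ((2:ℝ)^n)^k := by
        rw [hCdef]
        have ha : ((2:ℝ)^n) ≠ 0 := by positivity
        have hc : ((I.card:ℝ)) ≠ 0 := by linarith
        have expand : (I.card : ℝ) * ((2:ℝ)^n *
            (2 * (δ/2 * ((2:ℝ)^n)⁻¹ * ((I.card:ℝ))⁻¹) * ((2:ℝ)^n)^k)) = δ * ((2:ℝ)^n)^k := by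
          calc (I.card : ℝ) * ((2:ℝ)^n *
              (2 * (δ/2 * ((2:ℝ)^n)⁻¹ * ((I.card:ℝ))⁻¹) * ((2:ℝ)^n)^k))
              = ((I.card:ℝ) * ((I.card:ℝ))⁻¹) * (((2:ℝ)^n * ((2:ℝ)^n)⁻¹)
                  * (δ * ((2:ℝ)^n)^k)) := by ring
            _ = δ * ((2:ℝ)^n)^k := by
                rw [mul_inv_cancel₀ hc, mul_inv_cancel₀ ha, one_mul, one_mul]
        calc (I.card : ℝ) * ((2:ℝ)^n * (2 * Real.exp (-((k:ℝ)*τ^2)/2) * ((2:ℝ)^n)^k))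
            ≤ (I.card : ℝ) * ((2:ℝ)^n *
              (2 * (δ/2 * ((2:ℝ)^n)⁻¹ * ((I.card:ℝ))⁻¹) * ((2:ℝ)^n)^k)) := by
              gcongr
          _ = δ * ((2:ℝ)^n)^k := expand
      exact hBcard.trans step
    -- conclude
    rw [le_div_iff₀ hT]
    have hsplit := Finset.card_filter_add_card_filter_not
      (s := (univ : Finset (Fin k → (Fin n → ZMod 2))))
      (p := fun qs => ∀ i ∈ I, |∑ j ∈ Finset.univ.erase i, twirlAvg n k M qs i j| ≤ ε ∧
          |twirlAvg n k M qs i i - M i i| ≤ ε)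
    rw [card_univ] at hsplit
    have hsplit' : ((Finset.univ.filter fun qs : Fin k → (Fin n → ZMod 2) =>
        ∀ i ∈ I, |∑ j ∈ Finset.univ.erase i, twirlAvg n k M qs i j| ≤ ε ∧
          |twirlAvg n k M qs i i - M i i| ≤ ε).card : ℝ) + (B.card : ℝ) = ((2:ℝ)^n)^k := by
      rw [← hcardΩ]
      exact_mod_cast hsplit
    linarith
end

section
/- For w ∈ (ZMod 2)^n, let Z_w be the 2^n × 2^n diagonal matrix with entries (Z_w)_{a,a} = (-1)^{⟨w,a⟩}, and for a probability vector p over (ZMod 2)^n let ⟨Z_w⟩_p = ∑_x (-1)^{⟨w,x⟩} p_x. If p̃ = A⋆ p for the twirled noise map A⋆ (A⋆_{a,b} = 2^{-n} ∑_s A_{a+s,b+s} with A left-stochastic), then ⟨Z_w⟩_{p̃} = λ_w ⟨Z_w⟩_p, where λ_w = 2^{-n} ∑_{a,b} (-1)^{⟨w,a+b⟩} A_{a,b}. -/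
open Matrix Finset

/-- The X-twirl of a readout noise map `A`. -/
noncomputable def twirl (n : ℕ) (A : Matrix (Fin n → ZMod 2) (Fin n → ZMod 2) ℝ) :
    Matrix (Fin n → ZMod 2) (Fin n → ZMod 2) ℝ :=
  Matrix.of fun a b => (1 / 2 ^ n : ℝ) * ∑ s, A (a + s) (b + s)

noncomputable def chi {n : ℕ} (w x : Fin n → ZMod 2) : ℝ :=
  (-1 : ℝ) ^ (∑ i, w i * x i : ZMod 2).val

lemma neg_one_pow_val_add_s15 (u v : ZMod 2) :
    (-1 : ℝ) ^ (u + v).val = (-1 : ℝ) ^ u.val * (-1 : ℝ) ^ v.val := by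
  rw [ZMod.val_add]
  have hu := u.val_lt; have hv := v.val_lt
  interval_cases u.val <;> interval_cases v.val <;> norm_num

lemma chi_add {n : ℕ} (w x y : Fin n → ZMod 2) :
    chi w (x + y) = chi w x * chi w y := by
  unfold chi
  have h : (∑ i, w i * (x + y) i : ZMod 2)
      = (∑ i, w i * x i) + (∑ i, w i * y i) := by
    rw [← Finset.sum_add_distrib]
    exact Finset.sum_congr rfl fun i _ => by simp [mul_add]
  rw [h, neg_one_pow_val_add_s15]

lemma chi_mul_self {n : ℕ} (w s : Fin n → ZMod 2) : chi w s * chi w s = 1 := by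
  unfold chi
  rw [← pow_add, ← two_mul, pow_mul]
  norm_num

lemma pi_self_add_self {n : ℕ} (s : Fin n → ZMod 2) : s + s = 0 := by
  ext i
  change s i + s i = 0
  generalize s i = t
  fin_cases t <;> rfl

/-- Central identity of the mitigation method: under twirled readout noise, every parity
observable `⟨Z_w⟩` is multiplied by the single scalar `λ_w`:
`⟨Z_w⟩_{p̃} = λ_w ⟨Z_w⟩_p` where `p̃ = A⋆ p`. -/
theorem twirled_parity_expectation (n : ℕ)
    (A : Matrix (Fin n → ZMod 2) (Fin n → ZMod 2) ℝ)
    (hApos : ∀ a b, 0 ≤ A a b) (hAcol : ∀ b, ∑ a, A a b = 1)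
    (p : (Fin n → ZMod 2) → ℝ) (hppos : ∀ x, 0 ≤ p x) (hpsum : ∑ x, p x = 1)
    (w : Fin n → ZMod 2) :
    ∑ x, (-1 : ℝ) ^ (∑ i, w i * x i : ZMod 2).val * (twirl n A).mulVec p x =
      ((1 / 2 ^ n : ℝ) *
        ∑ a, ∑ b, (-1 : ℝ) ^ (∑ i, w i * (a i + b i) : ZMod 2).val * A a b) *
      ∑ x, (-1 : ℝ) ^ (∑ i, w i * x i : ZMod 2).val * p x := by
  classical
  set c : ℝ := (1 / 2 ^ n : ℝ) with hc
  -- rewrite the powers of -1 as `chi`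
  show ∑ x, chi w x * (twirl n A).mulVec p x =
      (c * ∑ a, ∑ b, chi w (a + b) * A a b) * ∑ x, chi w x * p x
  -- step A : reindex x ↦ x + s
  have stepA : ∀ s b : Fin n → ZMod 2,
      ∑ x, chi w x * A (x + s) (b + s) = chi w s * ∑ a, chi w a * A a (b + s) := by
    intro s b
    rw [Finset.mul_sum]
    refine Fintype.sum_equiv (Equiv.addRight s) _ _ fun x => ?_
    have hx : x + s + s = x := by rw [add_assoc, pi_self_add_self, add_zero]
    simp only [Equiv.coe_addRight, hx]
    rw [chi_add]
    calc chi w x * A (x + s) (b + s)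
        = (chi w s * chi w s) * (chi w x * A (x + s) (b + s)) := by
          rw [chi_mul_self, one_mul]
      _ = chi w s * (chi w x * chi w s * A (x + s) (b + s)) := by ring
  -- step B : reindex s ↦ b + s
  have stepB : ∀ a b : Fin n → ZMod 2,
      ∑ s, chi w s * A a (b + s) = chi w b * ∑ b', chi w b' * A a b' := by
    intro a b
    rw [Finset.mul_sum]
    refine Fintype.sum_equiv (Equiv.addLeft b) _ _ fun s => ?_
    have hb : b + (b + s) = s := by rw [← add_assoc, pi_self_add_self, zero_add]
    simp only [Equiv.coe_addLeft, hb]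
    calc chi w s * A a (b + s)
        = (chi w b * chi w b) * (chi w s * A a (b + s)) := by
          rw [chi_mul_self, one_mul]
      _ = chi w b * (chi w (b + s) * A a (b + s)) := by rw [chi_add]; ring
  have key : ∀ b : Fin n → ZMod 2,
      ∑ x, chi w x * twirl n A x b
        = c * chi w b * ∑ a, ∑ b', chi w a * (chi w b' * A a b') := by
    intro b
    have : ∑ x, chi w x * twirl n A x b
        = c * ∑ s, ∑ x, chi w x * A (x + s) (b + s) := by
      simp only [twirl, of_apply, Finset.mul_sum]
      rw [Finset.sum_comm]
      exact Finset.sum_congr rfl fun s _ => Finset.sum_congr rfl fun x _ => by ring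
    rw [this]
    have h2 : ∑ s, ∑ x, chi w x * A (x + s) (b + s)
        = ∑ a, chi w a * ∑ s, chi w s * A a (b + s) := by
      calc ∑ s, ∑ x, chi w x * A (x + s) (b + s)
          = ∑ s, ∑ a, chi w s * (chi w a * A a (b + s)) := by
            refine Finset.sum_congr rfl fun s _ => ?_
            rw [stepA s b, Finset.mul_sum]
        _ = ∑ a, ∑ s, chi w s * (chi w a * A a (b + s)) := Finset.sum_comm
        _ = ∑ a, chi w a * ∑ s, chi w s * A a (b + s) := by
            refine Finset.sum_congr rfl fun a _ => ?_
            rw [Finset.mul_sum]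
            exact Finset.sum_congr rfl fun s _ => by ring
    rw [h2]
    have h3 : ∑ a, chi w a * ∑ s, chi w s * A a (b + s)
        = chi w b * ∑ a, ∑ b', chi w a * (chi w b' * A a b') := by
      rw [Finset.mul_sum]
      refine Finset.sum_congr rfl fun a _ => ?_
      rw [stepB a b, Finset.mul_sum, Finset.mul_sum, Finset.mul_sum]
      exact Finset.sum_congr rfl fun b' _ => by ring
    rw [h3]; ring
  calc ∑ x, chi w x * (twirl n A).mulVec p x
      = ∑ x, ∑ b, chi w x * twirl n A x b * p b := by
        refine Finset.sum_congr rfl fun x _ => ?_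
        simp only [mulVec, dotProduct, Finset.mul_sum]
        exact Finset.sum_congr rfl fun b _ => by ring
    _ = ∑ b, (∑ x, chi w x * twirl n A x b) * p b := by
        rw [Finset.sum_comm]
        exact Finset.sum_congr rfl fun b _ => by rw [Finset.sum_mul]
    _ = ∑ b, (c * chi w b * ∑ a, ∑ b', chi w a * (chi w b' * A a b')) * p b := by
        exact Finset.sum_congr rfl fun b _ => by rw [key b]
    _ = (c * ∑ a, ∑ b', chi w a * (chi w b' * A a b')) * ∑ b, chi w b * p b := by
        rw [Finset.mul_sum]
        exact Finset.sum_congr rfl fun b _ => by ring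
    _ = (c * ∑ a, ∑ b, chi w (a + b) * A a b) * ∑ x, chi w x * p x := by
        congr 2
        exact Finset.sum_congr rfl fun a _ => Finset.sum_congr rfl fun b _ => by
          rw [chi_add]; ring
end
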